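/- Suppose lim_{j→∞} γ_j = 0 and there exist C > 0 and β > 1 such that λ_j ≤ C·exp(−(log j)^β) for all j ≥ 1. Then EXP-WT holds. -/

import Mathlib

open Filter Real Set Topology
open scoped ENNReal NNReal

noncomputable section

/-- The weighted eigenvalues `λ_{k,j}`: `1` if `j = 1`, and `γ_k · λ_j` if `j ≥ 2`. -/
def lamKJ (γ lam : ℕ → ℝ) (k j : ℕ) : ℝ := if j = 1 then 1 else γ k * lam j

/-- The information complexity `n(ε,d)`: the extended-natural cardinality of the set of
`d`-tuples of positive integers `(n_1,…,n_d)` with `λ_{1,n_1} ⋯ λ_{d,n_d} > ε²`. -/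
def infoN (γ lam : ℕ → ℝ) (ε : ℝ) (d : ℕ) : ℕ∞ :=
  {n : Fin d → ℕ | (∀ i, 1 ≤ n i) ∧ ε ^ 2 < ∏ i, lamKJ γ lam (i.1 + 1) (n i)}.encard

/-- EXP-SPT with a given exponent `p`: there is `C ≥ 0` with
`n(ε,d) ≤ C (1 + log ε⁻¹)^p` for all `d ≥ 1` and `ε ∈ (0,1]`. -/
def ExpSPTwith (γ lam : ℕ → ℝ) (p : ℝ) : Prop :=
  ∃ C : ℝ, 0 ≤ C ∧ ∀ d : ℕ, 1 ≤ d → ∀ ε : ℝ, 0 < ε → ε ≤ 1 →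
    (infoN γ lam ε d : ℝ≥0∞) ≤ ENNReal.ofReal (C * (1 + Real.log ε⁻¹) ^ p)

/-- Exponential strong polynomial tractability. -/
def ExpSPT (γ lam : ℕ → ℝ) : Prop := ∃ p : ℝ, 0 ≤ p ∧ ExpSPTwith γ lam p

/-- Exponential polynomial tractability: there are `C, q, p ≥ 0` with
`n(ε,d) ≤ C d^q (1 + log ε⁻¹)^p` for all `d ≥ 1` and `ε ∈ (0,1]`. -/
def ExpPT (γ lam : ℕ → ℝ) : Prop :=
  ∃ C q p : ℝ, 0 ≤ C ∧ 0 ≤ q ∧ 0 ≤ p ∧ ∀ d : ℕ, 1 ≤ d → ∀ ε : ℝ, 0 < ε → ε ≤ 1 →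
    (infoN γ lam ε d : ℝ≥0∞) ≤ ENNReal.ofReal (C * (d : ℝ) ^ q * (1 + Real.log ε⁻¹) ^ p)

/-- EXP-QPT with a given exponent `t`. -/
def ExpQPTwith (γ lam : ℕ → ℝ) (t : ℝ) : Prop :=
  ∃ C : ℝ, 0 ≤ C ∧ ∀ d : ℕ, 1 ≤ d → ∀ ε : ℝ, 0 < ε → ε ≤ 1 →
    (infoN γ lam ε d : ℝ≥0∞) ≤
      ENNReal.ofReal (C * Real.exp (t * (1 + Real.log d) * (1 + Real.log (1 + Real.log ε⁻¹))))

/-- Exponential quasi-polynomial tractability. -/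
def ExpQPT (γ lam : ℕ → ℝ) : Prop := ∃ t : ℝ, 0 ≤ t ∧ ExpQPTwith γ lam t

/-- Exponential `(s,t)`-weak tractability:
`log max(1, n(ε,d)) / (d^t + (1 + log ε⁻¹)^s) → 0` as `d + ε⁻¹ → ∞`
(in particular `n(ε,d)` is finite for all such `d, ε`). -/
def ExpSTWT (γ lam : ℕ → ℝ) (s t : ℝ) : Prop :=
  ∀ δ : ℝ, 0 < δ → ∃ T : ℝ, ∀ d : ℕ, 1 ≤ d → ∀ ε : ℝ, 0 < ε → ε ≤ 1 →
    T ≤ (d : ℝ) + ε⁻¹ →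
    ∃ N : ℕ, infoN γ lam ε d = (N : ℕ∞) ∧
      Real.log (max 1 (N : ℝ)) / ((d : ℝ) ^ t + (1 + Real.log ε⁻¹) ^ s) < δ

/-- `j(ε) = max { j ≥ 1 : λ_j > ε² }` (a well-defined maximum when `λ_j → 0`). -/
def jEps (lam : ℕ → ℝ) (ε : ℝ) : ℕ := sSup {j : ℕ | 1 ≤ j ∧ ε ^ 2 < lam j}

/-- `d(ε) = max { d ≥ 1 : γ_d > ε² }`, with `d(ε) = 0` if `γ_1 ≤ ε²`
(a well-defined maximum when `γ_d → 0`). -/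
def dEps (γ : ℕ → ℝ) (ε : ℝ) : ℕ := sSup {d : ℕ | 1 ≤ d ∧ ε ^ 2 < γ d}


private lemma sum_inv_sq_aux : ∀ M : ℕ, 1 ≤ M →
    (∑ j ∈ Finset.Icc 2 M, (1:ℝ)/(j:ℝ)^2) ≤ 1 - 1/(M:ℝ) := by
  intro M hM
  induction M with
  | zero => omega
  | succ M ih =>
    rcases Nat.lt_or_ge M 1 with h | h
    · interval_cases M
      norm_num
    · have ihM := ih h
      rw [Finset.sum_Icc_succ_top (by omega : 2 ≤ M + 1)]
      have h1 : (0:ℝ) < (M:ℝ) := by exact_mod_cast h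
      have h2 : (0:ℝ) < (M:ℝ)+1 := by positivity
      have key : 1/((M:ℝ)+1)^2 ≤ 1/(M:ℝ) - 1/((M:ℝ)+1) := by
        rw [div_sub_div _ _ (ne_of_gt h1) (ne_of_gt h2), div_le_div_iff₀ (by positivity) (by positivity)]
        nlinarith
      push_cast
      push_cast at ihM
      linarith

private lemma sum_inv_sq_le_one (M : ℕ) :
    (∑ j ∈ Finset.Icc 2 M, (1:ℝ)/(j:ℝ)^2) ≤ 1 := by
  rcases Nat.lt_or_ge M 1 with h | h
  · interval_cases M
    norm_num
  · have := sum_inv_sq_aux M h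
    have h1 : (0:ℝ) < (M:ℝ) := by exact_mod_cast h
    have : 0 ≤ 1/(M:ℝ) := by positivity
    linarith [sum_inv_sq_aux M h]

set_option maxHeartbeats 1000000 in
/-- if γ_j → 0 and λ_j ≤ C·exp(−(log j)^β) for some C > 0, β > 1 and all
j ≥ 1, then EXP-WT holds. -/
theorem stmt15 (γ lam : ℕ → ℝ)
    (hlam_anti : AntitoneOn lam (Set.Ici 1)) (hlam1 : lam 1 = 1) (hlam2 : 0 < lam 2)
    (hlam_nonneg : ∀ j, 1 ≤ j → 0 ≤ lam j)
    (hγ_anti : AntitoneOn γ (Set.Ici 1))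
    (hγ_pos : ∀ j, 1 ≤ j → 0 < γ j) (hγ_le : ∀ j, 1 ≤ j → γ j ≤ 1)
    (hγ0 : Tendsto γ atTop (nhds 0)) (C β : ℝ) (hC : 0 < C) (hβ : 1 < β)
    (hbd : ∀ j : ℕ, 1 ≤ j → lam j ≤ C * Real.exp (-(Real.log j) ^ β)) :
    ExpSTWT γ lam 1 1 := by
  intro δ hδ
  have hβpos : (0:ℝ) < β := by linarith
  have hβ1 : (0:ℝ) < β - 1 := by linarith
  -- choose θ
  set θ : ℝ := min (δ/8) 1 with hθdef
  have hθpos : 0 < θ := lt_min (by linarith) one_pos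
  have hθδ : θ ≤ δ/8 := min_le_left _ _
  -- choose J₀ with tail bound
  set x₀ : ℝ := (2/θ) ^ (1/(β-1)) with hx₀def
  have hx₀nonneg : 0 ≤ x₀ := Real.rpow_nonneg (by positivity) _
  set J₀ : ℕ := max 2 ⌈Real.exp x₀⌉₊ with hJ₀def
  have hJ₀key : ∀ j : ℕ, J₀ ≤ j → Real.exp (-(θ * Real.log j ^ β)) ≤ 1/(j:ℝ)^2 := by
    intro j hj
    have hj2 : 2 ≤ j := le_trans (le_max_left _ _) hj
    have hjR : (2:ℝ) ≤ (j:ℝ) := by exact_mod_cast hj2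
    have hjpos : (0:ℝ) < (j:ℝ) := by linarith
    have hlogpos : 0 < Real.log j := Real.log_pos (by linarith)
    have hxj : x₀ ≤ Real.log j := by
      have h1 : Real.exp x₀ ≤ (j:ℝ) := by
        calc Real.exp x₀ ≤ (⌈Real.exp x₀⌉₊ : ℝ) := Nat.le_ceil _
          _ ≤ (J₀ : ℝ) := by exact_mod_cast le_max_right 2 _
          _ ≤ (j:ℝ) := by exact_mod_cast hj
      have h2 := Real.log_le_log (Real.exp_pos _) h1
      rwa [Real.log_exp] at h2
    have hpow : 2/θ ≤ Real.log j ^ (β-1) := by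
      have h2 : x₀ ^ (β-1) = 2/θ := by
        rw [hx₀def, ← Real.rpow_mul (by positivity), one_div,
          inv_mul_cancel₀ (ne_of_gt hβ1), Real.rpow_one]
      rw [← h2]
      exact Real.rpow_le_rpow hx₀nonneg hxj (le_of_lt hβ1)
    have hsplit : Real.log j ^ β = Real.log j ^ (β-1) * Real.log j := by
      calc Real.log j ^ β = Real.log j ^ ((β-1)+1) := by rw [sub_add_cancel]
        _ = Real.log j ^ (β-1) * Real.log j ^ (1:ℝ) := Real.rpow_add hlogpos _ _
        _ = Real.log j ^ (β-1) * Real.log j := by rw [Real.rpow_one]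
    have h2l : 2 * Real.log j ≤ θ * Real.log j ^ β := by
      rw [hsplit]
      have h3 : (2/θ) * Real.log j ≤ Real.log j ^ (β-1) * Real.log j :=
        mul_le_mul_of_nonneg_right hpow (le_of_lt hlogpos)
      have h4 : θ * ((2/θ) * Real.log j) ≤ θ * (Real.log j ^ (β-1) * Real.log j) :=
        mul_le_mul_of_nonneg_left h3 hθpos.le
      have h5 : θ * ((2/θ) * Real.log j) = 2 * Real.log j := by
        field_simp
      linarith
    have hexpj : Real.exp (2 * Real.log j) = (j:ℝ)^2 := by
      rw [two_mul, Real.exp_add, Real.exp_log hjpos]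
      ring
    calc Real.exp (-(θ * Real.log j ^ β)) ≤ Real.exp (-(2 * Real.log j)) :=
          Real.exp_le_exp.mpr (by linarith)
      _ = 1/(j:ℝ)^2 := by rw [Real.exp_neg, hexpj, one_div]
  -- F bounds the θ-power tail sums uniformly
  set F : ℝ := C ^ θ * ((J₀:ℝ) + 1) with hFdef
  have hCθpos : (0:ℝ) < C ^ θ := Real.rpow_pos_of_pos hC θ
  have hFpos : 0 < F := by positivity
  have htail : ∀ M : ℕ, (∑ j ∈ Finset.Icc 2 M, lam j ^ θ) ≤ F := by
    intro M
    have h1 : ∀ j ∈ Finset.Icc 2 M, lam j ^ θ ≤ C ^ θ * Real.exp (-(θ * Real.log j ^ β)) := by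
      intro j hj
      rw [Finset.mem_Icc] at hj
      have hbdj := hbd j (by omega)
      calc lam j ^ θ ≤ (C * Real.exp (-Real.log j ^ β)) ^ θ :=
            Real.rpow_le_rpow (hlam_nonneg j (by omega)) hbdj hθpos.le
        _ = C ^ θ * Real.exp (-Real.log j ^ β) ^ θ := Real.mul_rpow hC.le (Real.exp_pos _).le
        _ = C ^ θ * Real.exp (-(θ * Real.log j ^ β)) := by
            rw [← Real.exp_mul]
            ring_nf
    have h2 : (∑ j ∈ Finset.Icc 2 M, Real.exp (-(θ * Real.log j ^ β))) ≤ (J₀:ℝ) + 1 := by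
      have hsum : ∀ j ∈ Finset.Icc 2 M,
          Real.exp (-(θ * Real.log j ^ β)) ≤ (if j < J₀ then (1:ℝ) else 1/(j:ℝ)^2) := by
        intro j hj
        rw [Finset.mem_Icc] at hj
        by_cases h : j < J₀
        · simp only [h, if_true]
          rw [Real.exp_le_one_iff]
          have hjR1 : (1:ℝ) ≤ (j:ℝ) := by exact_mod_cast (by omega : 1 ≤ j)
          have hlognn : 0 ≤ Real.log j := Real.log_nonneg hjR1
          have := mul_nonneg hθpos.le (Real.rpow_nonneg hlognn β)
          linarith
        · simp only [h, if_false]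
          exact hJ₀key j (by omega)
      calc (∑ j ∈ Finset.Icc 2 M, Real.exp (-(θ * Real.log j ^ β)))
          ≤ ∑ j ∈ Finset.Icc 2 M, (if j < J₀ then (1:ℝ) else 1/(j:ℝ)^2) :=
            Finset.sum_le_sum hsum
        _ = ((Finset.Icc 2 M).filter (fun j => j < J₀)).card • (1:ℝ)
            + ∑ j ∈ (Finset.Icc 2 M).filter (fun j => ¬ j < J₀), 1/(j:ℝ)^2 := by
            rw [Finset.sum_ite, Finset.sum_const]
        _ ≤ (J₀:ℝ) + 1 := by
            have hc1 : ((Finset.Icc 2 M).filter (fun j => j < J₀)).card ≤ J₀ := by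
              calc ((Finset.Icc 2 M).filter (fun j => j < J₀)).card
                  ≤ (Finset.range J₀).card := by
                    apply Finset.card_le_card
                    intro j hj
                    rw [Finset.mem_filter] at hj
                    exact Finset.mem_range.mpr hj.2
                _ = J₀ := Finset.card_range J₀
            have hc1R : (((Finset.Icc 2 M).filter (fun j => j < J₀)).card : ℝ) ≤ (J₀:ℝ) := by
              exact_mod_cast hc1
            have hc2 : (∑ j ∈ (Finset.Icc 2 M).filter (fun j => ¬ j < J₀), 1/(j:ℝ)^2) ≤ 1 := by
              calc (∑ j ∈ (Finset.Icc 2 M).filter (fun j => ¬ j < J₀), 1/(j:ℝ)^2)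
                  ≤ ∑ j ∈ Finset.Icc 2 M, 1/(j:ℝ)^2 := by
                    apply Finset.sum_le_sum_of_subset_of_nonneg (Finset.filter_subset _ _)
                    intro j _ _
                    positivity
                _ ≤ 1 := sum_inv_sq_le_one M
            rw [nsmul_eq_mul, mul_one]
            linarith
    calc (∑ j ∈ Finset.Icc 2 M, lam j ^ θ)
        ≤ ∑ j ∈ Finset.Icc 2 M, C ^ θ * Real.exp (-(θ * Real.log j ^ β)) :=
          Finset.sum_le_sum h1
      _ = C ^ θ * ∑ j ∈ Finset.Icc 2 M, Real.exp (-(θ * Real.log j ^ β)) := by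
          rw [Finset.mul_sum]
      _ ≤ C ^ θ * ((J₀:ℝ) + 1) := mul_le_mul_of_nonneg_left h2 hCθpos.le
  -- choose η and k₁
  set η : ℝ := min 1 (δ/(4*F)) with hηdef
  have hηpos : 0 < η := lt_min one_pos (by positivity)
  have hFη : F * η ≤ δ/4 := by
    calc F * η ≤ F * (δ/(4*F)) := mul_le_mul_of_nonneg_left (min_le_right _ _) hFpos.le
      _ = δ/4 := by field_simp
  obtain ⟨k₁, hk₁⟩ : ∃ k₁ : ℕ, ∀ k, k₁ ≤ k → γ k < η ^ (1/θ) := by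
    have hev : ∀ᶠ k in atTop, γ k < η ^ (1/θ) :=
      hγ0.eventually_lt_const (Real.rpow_pos_of_pos hηpos _)
    exact eventually_atTop.mp hev
  have hk₁' : ∀ k, 1 ≤ k → k₁ ≤ k → γ k ^ θ ≤ η := by
    intro k hk hkk
    have h0 : (0:ℝ) ≤ γ k := (hγ_pos k hk).le
    calc γ k ^ θ ≤ (η ^ (1/θ)) ^ θ :=
          Real.rpow_le_rpow h0 (hk₁ k hkk).le hθpos.le
      _ = η := by
          rw [← Real.rpow_mul hηpos.le, one_div, inv_mul_cancel₀ hθpos.ne', Real.rpow_one]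
  -- choose T
  set X : ℝ := 2*F*(k₁:ℝ)/δ + 1 with hXdef
  refine ⟨2 * max X (Real.exp X), ?_⟩
  intro d hd ε hε hε1 hTle
  have h1ε : (1:ℝ) ≤ ε⁻¹ := by
    have h := mul_inv_cancel₀ (ne_of_gt hε)
    have hi : 0 < ε⁻¹ := inv_pos.mpr hε
    nlinarith
  have hL0 : 0 ≤ Real.log ε⁻¹ := Real.log_nonneg h1ε
  have hε2 : (0:ℝ) < ε^2 := by positivity
  -- find M with lam j ≤ ε² for j > M
  obtain ⟨M, hM1, hMbd⟩ : ∃ M : ℕ, 1 ≤ M ∧ ∀ j : ℕ, M < j → lam j ≤ ε^2 := by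
    have h1 : Tendsto (fun j : ℕ => Real.log j) atTop atTop :=
      Real.tendsto_log_atTop.comp tendsto_natCast_atTop_atTop
    have h2 : Tendsto (fun j : ℕ => Real.log j ^ β) atTop atTop :=
      (tendsto_rpow_atTop hβpos).comp h1
    have h2' : Tendsto (fun j : ℕ => -(Real.log j ^ β)) atTop atBot :=
      Filter.tendsto_neg_atTop_atBot.comp h2
    have h3 : Tendsto (fun j : ℕ => C * Real.exp (-Real.log j ^ β)) atTop (nhds (C * 0)) :=
      tendsto_const_nhds.mul (Real.tendsto_exp_atBot.comp h2')
    rw [mul_zero] at h3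
    have hev : ∀ᶠ j : ℕ in atTop, C * Real.exp (-Real.log j ^ β) < ε ^ 2 :=
      h3.eventually_lt_const hε2
    obtain ⟨M₀, hM₀⟩ := eventually_atTop.mp hev
    refine ⟨max M₀ 1, le_max_right _ _, fun j hj => ?_⟩
    have hj1 : 1 ≤ j := le_of_lt (lt_of_le_of_lt (le_max_right M₀ 1) hj)
    have hjM₀ : M₀ ≤ j := le_of_lt (lt_of_le_of_lt (le_max_left M₀ 1) hj)
    exact le_of_lt (lt_of_le_of_lt (hbd j hj1) (hM₀ j hjM₀))
  -- the set A
  set A : Set (Fin d → ℕ) :=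
    {n : Fin d → ℕ | (∀ i, 1 ≤ n i) ∧ ε ^ 2 < ∏ i, lamKJ γ lam (i.1 + 1) (n i)} with hAdef
  have hfac_nonneg : ∀ (k j : ℕ), 1 ≤ k → 1 ≤ j → 0 ≤ lamKJ γ lam k j := by
    intro k j hk hj
    by_cases hj1 : j = 1
    · simp [lamKJ, hj1]
    · rw [lamKJ, if_neg hj1]
      exact mul_nonneg (hγ_pos k hk).le (hlam_nonneg j hj)
  have hlam_le_one : ∀ j, 1 ≤ j → lam j ≤ 1 := by
    intro j hj
    calc lam j ≤ lam 1 := hlam_anti (Set.mem_Ici.mpr le_rfl) (Set.mem_Ici.mpr hj) hj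
      _ = 1 := hlam1
  have hfac_le_one : ∀ (k j : ℕ), 1 ≤ k → 1 ≤ j → lamKJ γ lam k j ≤ 1 := by
    intro k j hk hj
    by_cases hj1 : j = 1
    · simp [lamKJ, hj1]
    · rw [lamKJ, if_neg hj1]
      calc γ k * lam j ≤ 1 * 1 :=
            mul_le_mul (hγ_le k hk) (hlam_le_one j hj) (hlam_nonneg j hj) zero_le_one
        _ = 1 := one_mul 1
  have hfac_gt : ∀ n ∈ A, ∀ i : Fin d, ε^2 < lamKJ γ lam (i.1+1) (n i) := by
    rintro n ⟨hn1, hn2⟩ i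
    have hprod : ∏ x ∈ Finset.univ.erase i, lamKJ γ lam (x.1+1) (n x) ≤ 1 :=
      Finset.prod_le_one (fun x _ => hfac_nonneg _ _ (by omega) (hn1 x))
        (fun x _ => hfac_le_one _ _ (by omega) (hn1 x))
    have hnn : 0 ≤ lamKJ γ lam (i.1+1) (n i) := hfac_nonneg _ _ (by omega) (hn1 i)
    have heq : lamKJ γ lam (i.1+1) (n i) * ∏ x ∈ Finset.univ.erase i, lamKJ γ lam (x.1+1) (n x)
        = ∏ x, lamKJ γ lam (x.1+1) (n x) :=
      Finset.mul_prod_erase Finset.univ (fun x => lamKJ γ lam (x.1+1) (n x)) (Finset.mem_univ i)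
    nlinarith [hn2]
  have hbox : ∀ n ∈ A, ∀ i : Fin d, n i ∈ Finset.Icc 1 M := by
    intro n hn i
    rw [Finset.mem_Icc]
    refine ⟨hn.1 i, ?_⟩
    by_contra h
    push_neg at h
    have hgt := hfac_gt n hn i
    rw [lamKJ, if_neg (by omega)] at hgt
    have hle2 : lam (n i) ≤ ε^2 := hMbd _ h
    have hγi := hγ_le (i.1+1) (by omega)
    have hγi0 := (hγ_pos (i.1+1) (by omega)).le
    have hlnn := hlam_nonneg (n i) (by omega)
    nlinarith
  have hAfin : A.Finite := by
    apply Set.Finite.subset (Fintype.piFinset (fun _ : Fin d => Finset.Icc 1 M)).finite_toSet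
    intro n hn
    exact Finset.mem_coe.mpr (Fintype.mem_piFinset.mpr (hbox n hn))
  have hinfo : infoN γ lam ε d = (hAfin.toFinset.card : ℕ∞) :=
    hAfin.encard_eq_coe_toFinset_card
  refine ⟨hAfin.toFinset.card, hinfo, ?_⟩
  -- Chernoff bound
  have hN : (hAfin.toFinset.card : ℝ) * (ε^2) ^ θ ≤ ∏ i : Fin d, (1 + γ (i.1+1) ^ θ * F) := by
    have step1 : (hAfin.toFinset.card : ℝ) * (ε^2) ^ θ
        ≤ ∑ n ∈ hAfin.toFinset, ∏ i : Fin d, lamKJ γ lam (i.1+1) (n i) ^ θ := by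
      have hconst : (hAfin.toFinset.card : ℝ) * (ε^2) ^ θ
          = ∑ _n ∈ hAfin.toFinset, (ε^2)^θ := by
        rw [Finset.sum_const, nsmul_eq_mul]
      rw [hconst]
      apply Finset.sum_le_sum
      intro n hn
      rw [Set.Finite.mem_toFinset] at hn
      have h1 : (ε^2)^θ ≤ (∏ i, lamKJ γ lam (i.1+1) (n i))^θ :=
        Real.rpow_le_rpow hε2.le hn.2.le hθpos.le
      rwa [← Real.finset_prod_rpow _ _ (fun i _ => hfac_nonneg _ _ (by omega) (hn.1 i)) θ] at h1
    have step2 : (∑ n ∈ hAfin.toFinset, ∏ i : Fin d, lamKJ γ lam (i.1+1) (n i) ^ θ)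
        ≤ ∑ n ∈ Fintype.piFinset (fun _ : Fin d => Finset.Icc 1 M),
            ∏ i : Fin d, lamKJ γ lam (i.1+1) (n i) ^ θ := by
      apply Finset.sum_le_sum_of_subset_of_nonneg
      · intro n hn
        rw [Set.Finite.mem_toFinset] at hn
        exact Fintype.mem_piFinset.mpr (hbox n hn)
      · intro n hn _
        apply Finset.prod_nonneg
        intro i _
        have hni : 1 ≤ n i := (Finset.mem_Icc.mp (Fintype.mem_piFinset.mp hn i)).1
        exact Real.rpow_nonneg (hfac_nonneg _ _ (by omega) hni) θ
    have step3 : (∑ n ∈ Fintype.piFinset (fun _ : Fin d => Finset.Icc 1 M),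
            ∏ i : Fin d, lamKJ γ lam (i.1+1) (n i) ^ θ)
        = ∏ i : Fin d, ∑ j ∈ Finset.Icc 1 M, lamKJ γ lam (i.1+1) j ^ θ :=
      (Finset.prod_univ_sum (fun _ : Fin d => Finset.Icc 1 M)
        (fun i j => lamKJ γ lam (i.1+1) j ^ θ)).symm
    have step4 : ∀ i : Fin d, (∑ j ∈ Finset.Icc 1 M, lamKJ γ lam (i.1+1) j ^ θ)
        ≤ 1 + γ (i.1+1) ^ θ * F := by
      intro i
      have hins : Finset.Icc 1 M = insert 1 (Finset.Icc 2 M) := by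
        ext j
        simp only [Finset.mem_Icc, Finset.mem_insert]
        omega
      rw [hins, Finset.sum_insert (by simp [Finset.mem_Icc])]
      have h1 : lamKJ γ lam (i.1+1) 1 ^ θ = 1 := by
        simp [lamKJ, Real.one_rpow]
      rw [h1]
      apply (add_le_add_iff_left 1).mpr
      have h2 : (∑ j ∈ Finset.Icc 2 M, lamKJ γ lam (i.1+1) j ^ θ)
          = γ (i.1+1)^θ * ∑ j ∈ Finset.Icc 2 M, lam j ^ θ := by
        rw [Finset.mul_sum]
        apply Finset.sum_congr rfl
        intro j hj
        rw [Finset.mem_Icc] at hj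
        rw [lamKJ, if_neg (by omega)]
        exact Real.mul_rpow (hγ_pos _ (by omega)).le (hlam_nonneg j (by omega))
      rw [h2]
      exact mul_le_mul_of_nonneg_left (htail M) (Real.rpow_nonneg (hγ_pos _ (by omega)).le θ)
    calc (hAfin.toFinset.card : ℝ) * (ε^2) ^ θ
        ≤ _ := step1
      _ ≤ _ := step2
      _ = _ := step3
      _ ≤ ∏ i : Fin d, (1 + γ (i.1+1)^θ * F) := by
          apply Finset.prod_le_prod
          · intro i _
            apply Finset.sum_nonneg
            intro j hj
            exact Real.rpow_nonneg
              (hfac_nonneg _ _ (by omega) (Finset.mem_Icc.mp hj).1) θ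
          · intro i _
            exact step4 i
  -- exponential bound on the product
  have hexp : (∏ i : Fin d, (1 + γ (i.1+1) ^ θ * F)) ≤ Real.exp (F * ((k₁:ℝ) + d * η)) := by
    have h1 : (∏ i : Fin d, (1 + γ (i.1+1)^θ * F)) ≤ ∏ i : Fin d, Real.exp (γ (i.1+1)^θ * F) := by
      apply Finset.prod_le_prod
      · intro i _
        have := mul_nonneg (Real.rpow_nonneg (hγ_pos (i.1+1) (by omega)).le θ) hFpos.le
        linarith
      · intro i _
        linarith [Real.add_one_le_exp (γ (i.1+1)^θ * F)]
    rw [← Real.exp_sum] at h1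
    refine h1.trans (Real.exp_le_exp.mpr ?_)
    rw [← Finset.sum_mul, mul_comm _ F]
    apply mul_le_mul_of_nonneg_left ?_ hFpos.le
    calc (∑ i : Fin d, γ (i.1+1)^θ)
        ≤ ∑ i : Fin d, (if i.1+1 < k₁ then (1:ℝ) else η) := by
          apply Finset.sum_le_sum
          intro i _
          by_cases h : i.1+1 < k₁
          · simp only [h, if_true]
            exact Real.rpow_le_one (hγ_pos _ (by omega)).le (hγ_le _ (by omega)) hθpos.le
          · simp only [h, if_false]
            exact hk₁' _ (by omega) (by omega)
      _ ≤ (k₁:ℝ) + (d:ℝ) * η := by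
          rw [Finset.sum_ite, Finset.sum_const, Finset.sum_const, nsmul_eq_mul, nsmul_eq_mul]
          have hc1 : (Finset.univ.filter (fun i : Fin d => i.1+1 < k₁)).card ≤ k₁ := by
            calc (Finset.univ.filter (fun i : Fin d => i.1+1 < k₁)).card
                ≤ (Finset.range k₁).card := by
                  apply Finset.card_le_card_of_injOn (fun i => i.1)
                  · intro a ha
                    rw [Finset.mem_coe, Finset.mem_filter] at ha
                    exact Finset.mem_range.mpr (show a.1 < k₁ by omega)
                  · intro a _ b _ hab
                    exact Fin.ext hab
              _ = k₁ := Finset.card_range k₁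
          have hc2 : (Finset.univ.filter (fun i : Fin d => ¬ i.1+1 < k₁)).card ≤ d := by
            calc (Finset.univ.filter (fun i : Fin d => ¬ i.1+1 < k₁)).card
                ≤ Finset.univ.card := Finset.card_filter_le _ _
              _ = d := by rw [Finset.card_univ, Fintype.card_fin]
          have hc1R : ((Finset.univ.filter (fun i : Fin d => i.1+1 < k₁)).card : ℝ) ≤ (k₁:ℝ) := by
            exact_mod_cast hc1
          have hc2R : ((Finset.univ.filter (fun i : Fin d => ¬ i.1+1 < k₁)).card : ℝ) ≤ (d:ℝ) := by
            exact_mod_cast hc2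
          nlinarith [hηpos.le]
  -- put everything together
  set L : ℝ := Real.log ε⁻¹ with hLdef
  set B : ℝ := F * ((k₁:ℝ) + d*η) + 2*θ*L with hBdef
  have hNB : (hAfin.toFinset.card : ℝ) ≤ Real.exp B := by
    have h1 : (ε^2)^θ = Real.exp (-(2*θ*L)) := by
      rw [Real.rpow_def_of_pos hε2]
      congr 1
      rw [Real.log_pow, hLdef, Real.log_inv]
      push_cast
      ring
    have h2 : (hAfin.toFinset.card : ℝ) * Real.exp (-(2*θ*L)) ≤ Real.exp (F * ((k₁:ℝ) + d*η)) := by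
      rw [← h1]
      exact hN.trans hexp
    have h4 : (hAfin.toFinset.card : ℝ) * Real.exp (-(2*θ*L)) * Real.exp (2*θ*L)
        ≤ Real.exp (F*((k₁:ℝ)+d*η)) * Real.exp (2*θ*L) :=
      mul_le_mul_of_nonneg_right h2 (Real.exp_pos _).le
    rw [mul_assoc, ← Real.exp_add] at h4
    have hz : -(2*θ*L) + 2*θ*L = 0 := by ring
    rw [hz, Real.exp_zero, mul_one, ← Real.exp_add] at h4
    exact h4
  have hB0 : 0 ≤ B := by
    have ht1 : (0:ℝ) ≤ F * ((k₁:ℝ) + d*η) :=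
      mul_nonneg hFpos.le (add_nonneg (Nat.cast_nonneg k₁)
        (mul_nonneg (Nat.cast_nonneg d) hηpos.le))
    have ht2 : (0:ℝ) ≤ 2*θ*L := mul_nonneg (by linarith) hL0
    rw [hBdef]
    linarith
  have hlogN : Real.log (max 1 (hAfin.toFinset.card : ℝ)) ≤ B := by
    have h5 : max 1 ((hAfin.toFinset.card : ℝ)) ≤ Real.exp B :=
      max_le (by rw [← Real.exp_zero]; exact Real.exp_le_exp.mpr hB0) hNB
    calc Real.log (max 1 (hAfin.toFinset.card : ℝ))
        ≤ Real.log (Real.exp B) :=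
          Real.log_le_log (lt_of_lt_of_le zero_lt_one (le_max_left _ _)) h5
      _ = B := Real.log_exp B
  -- final arithmetic
  simp only [Real.rpow_one]
  have hd1 : (1:ℝ) ≤ (d:ℝ) := by exact_mod_cast hd
  have hDdenpos : (0:ℝ) < (d:ℝ) + (1 + L) := by linarith
  rw [div_lt_iff₀ hDdenpos]
  have hXD : X ≤ (d:ℝ) + (1 + L) := by
    have hT2 : 2 * max X (Real.exp X) ≤ (d:ℝ) + ε⁻¹ := hTle
    rcases le_total (d:ℝ) ε⁻¹ with hcase | hcase
    · have h6 : Real.exp X ≤ ε⁻¹ := by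
        have := le_max_right X (Real.exp X)
        linarith
      have h7 : X ≤ L := by
        have h8 := Real.log_le_log (Real.exp_pos X) h6
        rwa [Real.log_exp] at h8
      linarith
    · have h6 : X ≤ (d:ℝ) := by
        have := le_max_left X (Real.exp X)
        linarith
      linarith
  have hFk : F * (k₁:ℝ) < (δ/2) * ((d:ℝ) + (1 + L)) := by
    have h7 : (δ/2)*X = F*(k₁:ℝ) + δ/2 := by
      rw [hXdef]
      field_simp
    have h8 : (δ/2)*X ≤ (δ/2)*((d:ℝ) + (1 + L)) :=
      mul_le_mul_of_nonneg_left hXD (by linarith)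
    linarith
  have t2 : (F*η)*(d:ℝ) ≤ (δ/4)*(d:ℝ) := mul_le_mul_of_nonneg_right hFη (by linarith)
  have t3 : 2*θ*L ≤ (δ/4)*L := by nlinarith
  have hB_lt : B < δ * ((d:ℝ) + (1 + L)) := by
    rw [hBdef]
    have t1 : F * ((k₁:ℝ) + d*η) = F*(k₁:ℝ) + (F*η)*(d:ℝ) := by ring
    nlinarith
  linarith
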